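/- Let N ≥ 1, let A be a nonempty bounded subset of ℝ^N and let δ > 0. Assume that the box dimension D := dim_B A of A exists, that D < N, and that the lower D-dimensional Minkowski content satisfies M_*^D(A) > 0. Then the distance zeta function diverges at D from the right along the reals: the function σ ↦ ∫_{A_δ} d(x,A)^{σ−N} dx tends to +∞ as σ → D⁺ (i.e., as real σ tends to D within (D,∞)). -/

import Mathlib

open MeasureTheory Metric Filter Set
open scoped ENNReal Topology

/-- The upper `r`-dimensional Minkowski content of a subset of `ℝ^N`. -/
noncomputable def upperMink (N : ℕ) (A : Set (EuclideanSpace ℝ (Fin N))) (r : ℝ) : ℝ≥0∞ :=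
  Filter.limsup (fun t : ℝ => volume (thickening t A) / ENNReal.ofReal (t ^ ((N : ℝ) - r)))
    (𝓝[>] (0 : ℝ))

/-- The lower `r`-dimensional Minkowski content of a subset of `ℝ^N`. -/
noncomputable def lowerMink (N : ℕ) (A : Set (EuclideanSpace ℝ (Fin N))) (r : ℝ) : ℝ≥0∞ :=
  Filter.liminf (fun t : ℝ => volume (thickening t A) / ENNReal.ofReal (t ^ ((N : ℝ) - r)))
    (𝓝[>] (0 : ℝ))

/-- The upper box (Minkowski) dimension of a subset of `ℝ^N`. -/
noncomputable def upperBoxDim (N : ℕ) (A : Set (EuclideanSpace ℝ (Fin N))) : ℝ :=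
  sInf {r : ℝ | 0 < r ∧ upperMink N A r = 0}

/-- The lower box (Minkowski) dimension of a subset of `ℝ^N`. -/
noncomputable def lowerBoxDim (N : ℕ) (A : Set (EuclideanSpace ℝ (Fin N))) : ℝ :=
  sInf {r : ℝ | 0 < r ∧ lowerMink N A r = 0}

/-- if the box dimension `D = dim_B A` exists, `D < N` and `M_*^D(A) > 0`,
then `σ ↦ ∫_{A_δ} d(x,A)^{σ−N} dx` tends to `+∞` as real `σ → D⁺`. -/
theorem stmt2 (N : ℕ) (hN : 1 ≤ N) (A : Set (EuclideanSpace ℝ (Fin N)))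
    (hA : A.Nonempty) (hb : Bornology.IsBounded A) (δ : ℝ) (hδ : 0 < δ) (D : ℝ)
    (hdim_upper : upperBoxDim N A = D) (hdim_lower : lowerBoxDim N A = D)
    (hDN : D < N) (hlow : 0 < lowerMink N A D) :
    Tendsto
      (fun σ : ℝ => ∫⁻ x in thickening δ A, ENNReal.ofReal (Metric.infDist x A ^ (σ - (N : ℝ))))
      (𝓝[>] D) (𝓝 (⊤ : ℝ≥0∞)) := by
  have hfin : volume (thickening 1 A) ≠ ⊤ := (hb.thickening).measure_lt_top.ne
  -- the set defining the upper box dimension contains N+1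
  have hmemS : ((N : ℝ) + 1) ∈ {r : ℝ | 0 < r ∧ upperMink N A r = 0} := by
    refine ⟨by positivity, ?_⟩
    have hb1 : ∀ᶠ t in 𝓝[>] (0 : ℝ),
        volume (thickening t A) / ENNReal.ofReal (t ^ ((N : ℝ) - ((N : ℝ) + 1)))
          ≤ volume (thickening 1 A) * ENNReal.ofReal t := by
      filter_upwards [Ioo_mem_nhdsGT_of_mem (by constructor <;> norm_num : (0:ℝ) ∈ Ico (0:ℝ) 1)]
        with t ht
      have h1 : (N : ℝ) - ((N : ℝ) + 1) = -1 := by ring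
      rw [h1, Real.rpow_neg_one, ENNReal.ofReal_inv_of_pos ht.1, div_eq_mul_inv, inv_inv]
      exact mul_le_mul_left (measure_mono (thickening_mono ht.2.le A)) _
    have h0 : Tendsto (fun t : ℝ => volume (thickening 1 A) * ENNReal.ofReal t)
        (𝓝[>] (0 : ℝ)) (𝓝 0) := by
      have h1 : Tendsto (fun t : ℝ => ENNReal.ofReal t) (𝓝[>] (0 : ℝ)) (𝓝 (ENNReal.ofReal 0)) :=
        (ENNReal.continuous_ofReal.tendsto 0).mono_left nhdsWithin_le_nhds
      simpa using ENNReal.Tendsto.const_mul h1 (Or.inr hfin)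
    refine le_antisymm ?_ (zero_le)
    calc upperMink N A ((N : ℝ) + 1)
        ≤ limsup (fun t : ℝ => volume (thickening 1 A) * ENNReal.ofReal t) (𝓝[>] (0 : ℝ)) :=
          limsup_le_limsup hb1
      _ = 0 := h0.limsup_eq
  -- there is `r < N` with `upperMink N A r = 0`
  have hSbdd : BddBelow {r : ℝ | 0 < r ∧ upperMink N A r = 0} := ⟨0, fun x hx => hx.1.le⟩
  obtain ⟨r, hrS, hrN⟩ : ∃ r ∈ {r : ℝ | 0 < r ∧ upperMink N A r = 0}, r < (N : ℝ) := by
    have h1 : sInf {r : ℝ | 0 < r ∧ upperMink N A r = 0} = D := hdim_upper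
    exact (csInf_lt_iff hSbdd ⟨_, hmemS⟩).mp (h1 ▸ hDN)
  -- the closure of A is a null set
  have hnull : volume (closure A) = 0 := by
    obtain ⟨hr0, hru⟩ := hrS
    have hev : ∀ᶠ t in 𝓝[>] (0 : ℝ),
        volume (closure A) ≤ ENNReal.ofReal (t ^ ((N : ℝ) - r)) := by
      have hlt : upperMink N A r < 1 := by rw [hru]; exact zero_lt_one
      have h1 : ∀ᶠ t in 𝓝[>] (0 : ℝ),
          volume (thickening t A) / ENNReal.ofReal (t ^ ((N : ℝ) - r)) < 1 :=
        eventually_lt_of_limsup_lt hlt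
      filter_upwards [h1, self_mem_nhdsWithin] with t h ht
      have htp : (0 : ℝ) < t := ht
      have hb0 : ENNReal.ofReal (t ^ ((N : ℝ) - r)) ≠ 0 := by
        simp only [ne_eq, ENNReal.ofReal_eq_zero, not_le]
        positivity
      have h2 := (ENNReal.div_lt_iff (Or.inl hb0) (Or.inl ENNReal.ofReal_ne_top)).mp h
      rw [one_mul] at h2
      exact le_trans (measure_mono (closure_subset_thickening htp A)) h2.le
    have hlim : Tendsto (fun t : ℝ => ENNReal.ofReal (t ^ ((N : ℝ) - r)))
        (𝓝[>] (0 : ℝ)) (𝓝 0) := by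
      have h3 : Tendsto (fun t : ℝ => t ^ ((N : ℝ) - r)) (𝓝[>] (0 : ℝ)) (𝓝 0) := by
        have hc : ContinuousAt (fun t : ℝ => t ^ ((N : ℝ) - r)) 0 :=
          Real.continuousAt_rpow_const 0 _ (Or.inr (by linarith))
        have h4 := hc.tendsto.mono_left (nhdsWithin_le_nhds (s := Ioi (0:ℝ)))
        rwa [Real.zero_rpow (show ((N : ℝ) - r) ≠ 0 by linarith)] at h4
      have := (ENNReal.continuous_ofReal.tendsto 0).comp h3
      simpa [Function.comp_def] using this
    exact le_zero_iff.mp (ge_of_tendsto hlim hev)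
  -- quantitative lower bound for the volume of small thickenings
  set c : ℝ≥0∞ := min (lowerMink N A D) 1 with hcdef
  have hc0 : c ≠ 0 := (lt_min hlow zero_lt_one).ne'
  have hctop : c ≠ ⊤ := ((min_le_right _ _).trans_lt ENNReal.one_lt_top).ne
  have hc20 : c / 2 ≠ 0 := (ENNReal.div_pos hc0 ENNReal.ofNat_ne_top).ne'
  have hhalf : c / 2 < lowerMink N A D :=
    lt_of_lt_of_le (ENNReal.half_lt_self hc0 hctop) (min_le_left _ _)
  have hev2 : ∀ᶠ s in 𝓝[>] (0 : ℝ),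
      c / 2 * ENNReal.ofReal (s ^ ((N : ℝ) - D)) ≤ volume (thickening s A) := by
    filter_upwards [eventually_lt_of_lt_liminf hhalf, self_mem_nhdsWithin] with s h hs
    have hsp : (0 : ℝ) < s := hs
    have hb0 : ENNReal.ofReal (s ^ ((N : ℝ) - D)) ≠ 0 := by
      simp only [ne_eq, ENNReal.ofReal_eq_zero, not_le]
      positivity
    exact ((ENNReal.lt_div_iff_mul_lt (Or.inl hb0) (Or.inl ENNReal.ofReal_ne_top)).mp h).le
  obtain ⟨u, hu0, hukey⟩ := mem_nhdsGT_iff_exists_Ioo_subset.mp hev2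
  rw [mem_Ioi] at hu0
  set b : ℝ := min (u / 2) δ with hbdef
  have hb0' : 0 < b := lt_min (by linarith) hδ
  have hbδ : b ≤ δ := min_le_right _ _
  have key : ∀ s : ℝ, 0 < s → s < b →
      c / 2 * ENNReal.ofReal (s ^ ((N : ℝ) - D)) ≤ volume (thickening s A) := by
    intro s h1 h2
    refine hukey ⟨h1, ?_⟩
    have := h2.trans_le (min_le_left _ _)
    linarith
  -- the eventual pointwise lower bound for the zeta function
  have hmain : ∀ᶠ σ in 𝓝[>] D,
      c / 2 * ENNReal.ofReal (b ^ (σ - D) * ((N : ℝ) - σ) / (σ - D))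
        ≤ ∫⁻ x in thickening δ A, ENNReal.ofReal (Metric.infDist x A ^ (σ - (N : ℝ))) := by
    have hevN : ∀ᶠ σ in 𝓝[>] D, σ < (N : ℝ) :=
      (eventually_lt_nhds hDN).filter_mono nhdsWithin_le_nhds
    filter_upwards [self_mem_nhdsWithin, hevN] with σ hDσ hσN
    rw [mem_Ioi] at hDσ
    have hp0 : σ - (N : ℝ) < 0 := by linarith
    have hpne : σ - (N : ℝ) ≠ 0 := hp0.ne
    have hq1 : (σ - (N : ℝ))⁻¹ * ((N : ℝ) - D) < -1 := by
      rw [inv_mul_eq_div, div_lt_iff_of_neg hp0]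
      linarith
    have hT0 : 0 < b ^ (σ - (N : ℝ)) := Real.rpow_pos_of_pos hb0' _
    have hmeas : Measurable fun x : EuclideanSpace ℝ (Fin N) =>
        Metric.infDist x A ^ (σ - (N : ℝ)) :=
      (continuous_infDist_pt A).measurable.pow_const _
    have hlc : (∫⁻ x in thickening δ A, ENNReal.ofReal (Metric.infDist x A ^ (σ - (N : ℝ))))
        = ∫⁻ t in Ioi (0 : ℝ),
            (volume.restrict (thickening δ A)) {x | t < Metric.infDist x A ^ (σ - (N : ℝ))} :=
      lintegral_eq_lintegral_meas_lt _
        (Eventually.of_forall fun x => Real.rpow_nonneg infDist_nonneg _) hmeas.aemeasurable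
    rw [hlc]
    calc c / 2 * ENNReal.ofReal (b ^ (σ - D) * ((N : ℝ) - σ) / (σ - D))
        = ∫⁻ t in Ioi (b ^ (σ - (N : ℝ))),
            c / 2 * ENNReal.ofReal (t ^ ((σ - (N : ℝ))⁻¹ * ((N : ℝ) - D))) := by
          rw [lintegral_const_mul _ ((measurable_id'.pow_const _).ennreal_ofReal)]
          congr 1
          rw [← ofReal_integral_eq_lintegral_ofReal (integrableOn_Ioi_rpow_of_lt hq1 hT0) ?_]
          · rw [integral_Ioi_rpow_of_lt hq1 hT0]
            congr 1
            have h1 : (b ^ (σ - (N : ℝ))) ^ ((σ - (N : ℝ))⁻¹ * ((N : ℝ) - D) + 1)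
                = b ^ (σ - D) := by
              rw [← Real.rpow_mul hb0'.le]
              congr 1
              field_simp
              ring
            have h2 : (σ - (N : ℝ))⁻¹ * ((N : ℝ) - D) + 1 = (σ - D) / (σ - (N : ℝ)) := by
              field_simp
              ring
            rw [h1, h2]
            have hσD : σ - D ≠ 0 := sub_ne_zero.mpr (ne_of_gt hDσ)
            field_simp
            ring
          · filter_upwards [ae_restrict_mem measurableSet_Ioi] with t ht
            exact Real.rpow_nonneg (le_of_lt (hT0.trans ht)) _
      _ ≤ ∫⁻ t in Ioi (b ^ (σ - (N : ℝ))),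
            (volume.restrict (thickening δ A)) {x | t < Metric.infDist x A ^ (σ - (N : ℝ))} := by
          refine setLIntegral_mono' measurableSet_Ioi fun t ht => ?_
          rw [mem_Ioi] at ht
          have htpos : 0 < t := hT0.trans ht
          have hs0 : 0 < t ^ (σ - (N : ℝ))⁻¹ := Real.rpow_pos_of_pos htpos _
          have hsb : t ^ (σ - (N : ℝ))⁻¹ < b := by
            have h3 := Real.rpow_lt_rpow_of_neg hT0 ht (inv_lt_zero.mpr hp0)
            rwa [Real.rpow_rpow_inv hb0'.le hpne] at h3
          have hst : (t ^ (σ - (N : ℝ))⁻¹) ^ (σ - (N : ℝ)) = t :=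
            Real.rpow_inv_rpow htpos.le hpne
          have hsub : thickening (t ^ (σ - (N : ℝ))⁻¹) A \ closure A
              ⊆ {x | t < Metric.infDist x A ^ (σ - (N : ℝ))} ∩ thickening δ A := by
            rintro x ⟨hx1, hx2⟩
            have hgx : Metric.infDist x A < t ^ (σ - (N : ℝ))⁻¹ :=
              (mem_thickening_iff_infDist_lt hA).mp hx1
            have hgx0 : 0 < Metric.infDist x A :=
              lt_of_le_of_ne infDist_nonneg
                (fun h => hx2 ((mem_closure_iff_infDist_zero hA).mpr h.symm))
            refine ⟨?_, (mem_thickening_iff_infDist_lt hA).mpr (hgx.trans (hsb.trans_le hbδ))⟩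
            show t < Metric.infDist x A ^ (σ - (N : ℝ))
            calc t = (t ^ (σ - (N : ℝ))⁻¹) ^ (σ - (N : ℝ)) := hst.symm
              _ < Metric.infDist x A ^ (σ - (N : ℝ)) :=
                  Real.rpow_lt_rpow_of_neg hgx0 hgx hp0
          have hmsets : MeasurableSet (thickening (t ^ (σ - (N : ℝ))⁻¹) A \ closure A) :=
            isOpen_thickening.measurableSet.diff isClosed_closure.measurableSet
          calc c / 2 * ENNReal.ofReal (t ^ ((σ - (N : ℝ))⁻¹ * ((N : ℝ) - D)))
              = c / 2 * ENNReal.ofReal ((t ^ (σ - (N : ℝ))⁻¹) ^ ((N : ℝ) - D)) := by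
                rw [← Real.rpow_mul htpos.le]
            _ ≤ volume (thickening (t ^ (σ - (N : ℝ))⁻¹) A) := key _ hs0 hsb
            _ = volume (thickening (t ^ (σ - (N : ℝ))⁻¹) A \ closure A) :=
                (measure_diff_null hnull).symm
            _ = (volume.restrict (thickening δ A))
                  (thickening (t ^ (σ - (N : ℝ))⁻¹) A \ closure A) := by
                rw [Measure.restrict_apply hmsets]
                congr 1
                exact (inter_eq_left.mpr (fun x hx => (hsub hx).2)).symm
            _ ≤ (volume.restrict (thickening δ A))
                  {x | t < Metric.infDist x A ^ (σ - (N : ℝ))} :=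
                measure_mono fun x hx => (hsub hx).1
      _ ≤ ∫⁻ t in Ioi (0 : ℝ),
            (volume.restrict (thickening δ A)) {x | t < Metric.infDist x A ^ (σ - (N : ℝ))} :=
          lintegral_mono_set (Ioi_subset_Ioi hT0.le)
  -- the lower bound tends to infinity
  have hφ : Tendsto (fun σ : ℝ => c / 2 * ENNReal.ofReal (b ^ (σ - D) * ((N : ℝ) - σ) / (σ - D)))
      (𝓝[>] D) (𝓝 (⊤ : ℝ≥0∞)) := by
    have hb1 : Tendsto (fun σ : ℝ => b ^ (σ - D)) (𝓝[>] D) (𝓝 1) := by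
      have hcont : Continuous fun σ : ℝ => Real.exp (Real.log b * (σ - D)) :=
        Real.continuous_exp.comp (continuous_const.mul (continuous_id.sub continuous_const))
      have h4 := (hcont.tendsto D).mono_left (nhdsWithin_le_nhds (s := Ioi D))
      simp only [sub_self, mul_zero, Real.exp_zero] at h4
      exact h4.congr fun σ => (Real.rpow_def_of_pos hb0' _).symm
    have h2 : Tendsto (fun σ : ℝ => (N : ℝ) - σ) (𝓝[>] D) (𝓝 ((N : ℝ) - D)) :=
      ((continuous_const.sub continuous_id).tendsto D).mono_left nhdsWithin_le_nhds
    have h1 : Tendsto (fun σ : ℝ => b ^ (σ - D) * ((N : ℝ) - σ)) (𝓝[>] D)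
        (𝓝 ((N : ℝ) - D)) := by
      have := hb1.mul h2
      rwa [one_mul] at this
    have h3 : Tendsto (fun σ : ℝ => (σ - D)⁻¹) (𝓝[>] D) atTop := by
      have t1 : Tendsto (fun σ : ℝ => σ - D) (𝓝 D) (𝓝 (D - D)) :=
        (continuous_id.sub continuous_const).tendsto D
      rw [sub_self] at t1
      have t2 : Tendsto (fun σ : ℝ => σ - D) (𝓝[>] D) (𝓝[>] (0 : ℝ)) := by
        refine tendsto_nhdsWithin_of_tendsto_nhds_of_eventually_within _
          (t1.mono_left nhdsWithin_le_nhds) ?_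
        filter_upwards [self_mem_nhdsWithin] with σ hσ
        exact sub_pos.mpr (mem_Ioi.mp hσ)
      exact tendsto_inv_nhdsGT_zero.comp t2
    have h4 : Tendsto (fun σ : ℝ => b ^ (σ - D) * ((N : ℝ) - σ) * (σ - D)⁻¹) (𝓝[>] D) atTop :=
      h1.pos_mul_atTop (by linarith) h3
    have h5 : Tendsto (fun σ : ℝ => ENNReal.ofReal (b ^ (σ - D) * ((N : ℝ) - σ) / (σ - D)))
        (𝓝[>] D) (𝓝 (⊤ : ℝ≥0∞)) := by
      exact (ENNReal.tendsto_ofReal_atTop.comp h4).congr fun σ => by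
        simp [Function.comp, div_eq_mul_inv]
    have h6 := ENNReal.Tendsto.const_mul (a := c / 2) h5 (Or.inl (by simp))
    rwa [ENNReal.mul_top hc20] at h6
  exact tendsto_nhds_top_mono hφ hmain
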